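/- The dihedral Artin group DA_n = ⟨a, b ∣ [aba⋯]_n = [bab⋯]_n⟩ (alternating words of length n on each side) is isomorphic to the group G_{2,n} = ⟨x₁, x₂ ∣ Π(x₁,x₂;n) = Π(x₂,x₁;n)⟩, and also isomorphic to G_{n,2} = ⟨y₁,…,yₙ ∣ y₁y₂ = y₂y₃ = ⋯ = y_{n−1}yₙ = yₙy₁⟩. -/

import Mathlib

/-- The alternating word `[sts⋯]_k` of length `k` starting with `s`. -/
def altWord {α : Type*} (s t : FreeGroup α) (k : ℕ) : FreeGroup α :=
  ((List.range k).map (fun j => if j % 2 = 0 then s else t)).prod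

/-- Relator of the dihedral Artin group `DA_n = ⟨a,b ∣ [aba⋯]_n = [bab⋯]_n⟩`. -/
def DARels (n : ℕ) : Set (FreeGroup (Fin 2)) :=
  { altWord (FreeGroup.of 0) (FreeGroup.of 1) n *
      (altWord (FreeGroup.of 1) (FreeGroup.of 0) n)⁻¹ }

/-- Relator of `G_{2,n} = ⟨x₁,x₂ ∣ Π(x₁,x₂;n) = Π(x₂,x₁;n)⟩`: the alternating-cyclic
products of length `n`. -/
def G2nRels (n : ℕ) : Set (FreeGroup (Fin 2)) :=
  { altWord (FreeGroup.of 0) (FreeGroup.of 1) n *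
      (altWord (FreeGroup.of 1) (FreeGroup.of 0) n)⁻¹ }

/-- Relators of `G_{n,2} = ⟨y₁,…,yₙ ∣ y₁y₂ = y₂y₃ = ⋯ = yₙy₁⟩` (indices cyclic). -/
def Gn2Rels (n : ℕ) [NeZero n] : Set (FreeGroup (Fin n)) :=
  {r | ∃ i : Fin n, r = FreeGroup.of i * FreeGroup.of (i + 1) *
    (FreeGroup.of (0 : Fin n) * FreeGroup.of (1 : Fin n))⁻¹}

section Aux

variable {G : Type*} [Group G] {H : Type*} [Group H]

/-- Alternating word in any group. -/
def aw (s t : G) (k : ℕ) : G :=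
  ((List.range k).map (fun j => if j % 2 = 0 then s else t)).prod

lemma altWord_eq_aw {α : Type*} (s t : FreeGroup α) (k : ℕ) : altWord s t k = aw s t k := rfl

@[simp] lemma aw_zero (s t : G) : aw s t 0 = 1 := rfl

lemma aw_succ (s t : G) (k : ℕ) :
    aw s t (k + 1) = aw s t k * (if k % 2 = 0 then s else t) := by
  simp [aw, List.range_succ]

lemma map_aw (F : G →* H) (s t : G) (k : ℕ) : F (aw s t k) = aw (F s) (F t) k := by
  induction k with
  | zero => simp
  | succ k ih =>
    rw [aw_succ, aw_succ, map_mul, ih]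
    by_cases h : k % 2 = 0 <;> simp [h]

lemma aw_even (s t : G) {k m : ℕ} (hk : k = 2 * m) : aw s t k = (s * t) ^ m := by
  subst hk
  induction m with
  | zero => simp
  | succ m ih =>
    rw [show 2 * (m + 1) = (2 * m + 1) + 1 from by ring, aw_succ, aw_succ, ih]
    have h2 : (2 * m) % 2 = 0 := by omega
    have h3 : (2 * m + 1) % 2 = 1 := by omega
    rw [h2, h3]
    simp [pow_succ, mul_assoc]

lemma aw_odd (s t : G) {k m : ℕ} (hk : k = 2 * m + 1) : aw s t k = (s * t) ^ m * s := by
  subst hk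
  rw [aw_succ, aw_even s t rfl]
  simp [Nat.mul_mod_right]

/-- The word `w_k` : `w_0 = 1`, `w_1 = B`, `w_{k+2} = w_k * A * B`. -/
def ww (A B : G) (k : ℕ) : G := if k % 2 = 0 then aw A B k else aw B A k

@[simp] lemma ww_zero (A B : G) : ww A B 0 = 1 := rfl

@[simp] lemma ww_one (A B : G) : ww A B 1 = B := by simp [ww, aw_succ]

lemma ww_step (A B : G) (k : ℕ) : ww A B (k + 2) = ww A B k * A * B := by
  rcases Nat.even_or_odd k with ⟨m, hm⟩ | ⟨m, hm⟩
  · have hk : k = 2 * m := by omega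
    subst hk
    have h0 : (2 * m) % 2 = 0 := by omega
    have h1 : (2 * m + 1) % 2 = 1 := by omega
    have h2 : (2 * m + 2) % 2 = 0 := by omega
    simp only [ww, h0, h2, reduceIte,
      show 2 * m + 2 = (2 * m + 1) + 1 from rfl, aw_succ, h1]
    simp [h0]
  · subst hm
    have h0 : (2 * m + 1) % 2 = 1 := by omega
    have h1 : (2 * m + 1 + 1) % 2 = 0 := by omega
    have h2 : (2 * m + 1 + 2) % 2 = 1 := by omega
    simp only [ww, h0, h2, show 2 * m + 1 + 2 = (2 * m + 1 + 1) + 1 from rfl, aw_succ, h1]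
    simp [h0]

lemma map_ww (F : G →* H) (A B : G) (k : ℕ) : F (ww A B k) = ww (F A) (F B) k := by
  unfold ww
  by_cases h : k % 2 = 0 <;> simp [h, map_aw]

/-- `z_0 = A`, `z_{j+1} = w_j⁻¹ w_{j+1}`. -/
def zz (A B : G) : ℕ → G
  | 0 => A
  | (j + 1) => (ww A B j)⁻¹ * ww A B (j + 1)

@[simp] lemma zz_zero (A B : G) : zz A B 0 = A := rfl

@[simp] lemma zz_one (A B : G) : zz A B 1 = B := by simp [zz]

lemma map_zz (F : G →* H) (A B : G) (j : ℕ) : F (zz A B j) = zz (F A) (F B) j := by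
  cases j with
  | zero => rfl
  | succ j => simp [zz, map_ww]

lemma zz_mul (A B : G) (j : ℕ) : zz A B j * zz A B (j + 1) = A * B := by
  cases j with
  | zero => simp [zz]
  | succ j =>
    show ((ww A B j)⁻¹ * ww A B (j + 1)) * ((ww A B (j + 1))⁻¹ * ww A B (j + 2)) = A * B
    rw [ww_step]
    group

lemma zz_succ_succ (A B : G) (j : ℕ) :
    zz A B (j + 2) = (zz A B (j + 1))⁻¹ * (A * B) := by
  show (ww A B (j + 1))⁻¹ * ww A B (j + 2) = ((ww A B j)⁻¹ * ww A B (j + 1))⁻¹ * (A * B)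
  rw [ww_step]
  group

end Aux

/-- A relator is 1 in the presented group. -/
lemma mk_rel_one {α : Type*} {rels : Set (FreeGroup α)} {r : FreeGroup α} (hr : r ∈ rels) :
    PresentedGroup.mk rels r = 1 :=
  (QuotientGroup.eq_one_iff r).mpr (Subgroup.subset_normalClosure hr)

section Main

open Fin.NatCast

variable (n : ℕ) [NeZero n]

/-- Generators of the DA side. -/
noncomputable def Agen : PresentedGroup (DARels n) := PresentedGroup.of 0
noncomputable def Bgen : PresentedGroup (DARels n) := PresentedGroup.of 1

lemma relD : aw (Agen n) (Bgen n) n = aw (Bgen n) (Agen n) n := by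
  have h := mk_rel_one (rels := DARels n)
    (r := altWord (FreeGroup.of 0) (FreeGroup.of 1) n *
      (altWord (FreeGroup.of 1) (FreeGroup.of 0) n)⁻¹) rfl
  rw [map_mul, map_inv, altWord_eq_aw, altWord_eq_aw, map_aw, map_aw, mul_inv_eq_one] at h
  exact h

/-- Key relation in `DA_n`: `w_n = w_{n-1} * A`. -/
lemma ww_key (hn : 2 ≤ n) :
    ww (Agen n) (Bgen n) n = ww (Agen n) (Bgen n) (n - 1) * Agen n := by
  set A := Agen n with hA
  set B := Bgen n with hB
  have hrel : aw A B n = aw B A n := relD n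
  rcases Nat.even_or_odd n with ⟨m, hm⟩ | ⟨m, hm⟩
  · have hm' : n = 2 * m := by omega
    have h1 : n - 1 = 2 * (m - 1) + 1 := by omega
    have h2 : (n - 1) % 2 = 1 := by omega
    have h0 : n % 2 = 0 := by omega
    rw [show ww A B n = aw A B n from by simp [ww, h0],
      show ww A B (n - 1) = aw B A (n - 1) from by simp [ww, h2],
      aw_odd B A h1, aw_even A B hm', show (A * B) ^ m = (B * A) ^ m from by
        rw [← aw_even A B hm', ← aw_even B A hm']; exact hrel]
    conv_lhs => rw [show m = (m - 1) + 1 from by omega]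
    rw [pow_succ]
    group
  · have hm' : n = 2 * m + 1 := by omega
    have h2 : (n - 1) % 2 = 0 := by omega
    have h0 : n % 2 = 1 := by omega
    rw [show ww A B n = aw B A n from by simp [ww, h0],
      show ww A B (n - 1) = aw A B (n - 1) from by simp [ww, h2],
      aw_even A B (show n - 1 = 2 * m from by omega), ← hrel, aw_odd A B hm']

/-- Generators `Y k` of `G_{n,2}` indexed cyclically by naturals. -/
noncomputable def Y (k : ℕ) : PresentedGroup (Gn2Rels n) := PresentedGroup.of ((k : Fin n))

noncomputable def cc : PresentedGroup (Gn2Rels n) := Y n 0 * Y n 1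

lemma rel_fin (i : Fin n) :
    (PresentedGroup.of i : PresentedGroup (Gn2Rels n)) * PresentedGroup.of (i + 1) =
      PresentedGroup.of 0 * PresentedGroup.of 1 := by
  have h := mk_rel_one (rels := Gn2Rels n)
    (r := FreeGroup.of i * FreeGroup.of (i + 1) *
      (FreeGroup.of (0 : Fin n) * FreeGroup.of (1 : Fin n))⁻¹) ⟨i, rfl⟩
  rw [map_mul, map_inv, map_mul, map_mul, mul_inv_eq_one] at h
  exact h

lemma Y_step (k : ℕ) : Y n (k + 1) = (Y n k)⁻¹ * cc n := by
  have h := rel_fin n ((k : Fin n))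
  have hc : ((k + 1 : ℕ) : Fin n) = (k : Fin n) + 1 := by push_cast; ring
  unfold Y cc Y
  rw [hc, show ((0 : ℕ) : Fin n) = 0 from by simp, show ((1 : ℕ) : Fin n) = 1 from by simp,
    ← h]
  group

lemma Y_conj (k : ℕ) : Y n (k + 2) = (cc n)⁻¹ * Y n k * cc n := by
  rw [show k + 2 = (k + 1) + 1 from rfl, Y_step, Y_step]
  group

lemma Y_conj_pow (k m : ℕ) : Y n (k + 2 * m) = (cc n ^ m)⁻¹ * Y n k * cc n ^ m := by
  induction m with
  | zero => simp
  | succ m ih =>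
    rw [show k + 2 * (m + 1) = (k + 2 * m) + 2 from by ring, Y_conj, ih, pow_succ]
    group

lemma relG (hn : 2 ≤ n) : aw (Y n 0) (Y n 1) n = aw (Y n 1) (Y n 0) n := by
  have h10 : Y n 1 = (Y n 0)⁻¹ * cc n := Y_step n 0
  have hconj : Y n 1 * Y n 0 = (Y n 0)⁻¹ * cc n * ((Y n 0)⁻¹)⁻¹ := by rw [h10]; group
  have hc : Y n 0 * Y n 1 = cc n := rfl
  rcases Nat.even_or_odd n with ⟨m, hm⟩ | ⟨m, hm⟩
  · have hm' : n = 2 * m := by omega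
    have h0 : Y n (0 + 2 * m) = Y n 0 := by
      unfold Y; congr 1
      rw [zero_add, ← hm']
      simp [Fin.natCast_self]
    have hY := Y_conj_pow n 0 m
    rw [h0] at hY
    have hcomm : cc n ^ m * Y n 0 = Y n 0 * cc n ^ m := by
      calc cc n ^ m * Y n 0 = cc n ^ m * ((cc n ^ m)⁻¹ * Y n 0 * cc n ^ m) := by rw [← hY]
        _ = Y n 0 * cc n ^ m := by group
    rw [aw_even _ _ hm', aw_even _ _ hm', hc, hconj, conj_pow]
    calc cc n ^ m = (Y n 0)⁻¹ * (cc n ^ m * Y n 0) := by rw [hcomm]; group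
      _ = (Y n 0)⁻¹ * cc n ^ m * ((Y n 0)⁻¹)⁻¹ := by group
  · have hm' : n = 2 * m + 1 := by omega
    have h0 : Y n (1 + 2 * m) = Y n 0 := by
      unfold Y; congr 1
      rw [show 1 + 2 * m = n from by omega]
      simp [Fin.natCast_self]
    have hY := Y_conj_pow n 1 m
    rw [h0] at hY
    have hneed : cc n ^ m * Y n 0 = (Y n 0)⁻¹ * cc n * cc n ^ m := by
      calc cc n ^ m * Y n 0 = cc n ^ m * ((cc n ^ m)⁻¹ * Y n 1 * cc n ^ m) := by rw [← hY]
        _ = Y n 1 * cc n ^ m := by group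
        _ = (Y n 0)⁻¹ * cc n * cc n ^ m := by rw [h10]
    rw [aw_odd _ _ hm', aw_odd _ _ hm', hc, hconj, conj_pow, hneed, h10]
    group

/-- The map `Fin 2 → G_{n,2}` defining `φ`. -/
noncomputable def fmap : Fin 2 → PresentedGroup (Gn2Rels n) :=
  fun i => if i = 0 then Y n 0 else Y n 1

lemma phi_wd (hn : 2 ≤ n) :
    ∀ r ∈ DARels n, FreeGroup.lift (fmap n) r = 1 := by
  intro r hr
  simp only [DARels, Set.mem_singleton_iff] at hr
  subst hr
  rw [map_mul, map_inv, altWord_eq_aw, altWord_eq_aw, map_aw, map_aw, mul_inv_eq_one,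
    FreeGroup.lift_apply_of, FreeGroup.lift_apply_of]
  exact relG n hn

noncomputable def phi (hn : 2 ≤ n) :
    PresentedGroup (DARels n) →* PresentedGroup (Gn2Rels n) :=
  PresentedGroup.toGroup (phi_wd n hn)

/-- wraparound relation -/
lemma zz_wrap (hn : 2 ≤ n) :
    zz (Agen n) (Bgen n) (n - 1) * zz (Agen n) (Bgen n) 0 = Agen n * Bgen n := by
  set A := Agen n
  set B := Bgen n
  have h2 : n - 1 = (n - 2) + 1 := by omega
  have h3 : n = (n - 2) + 2 := by omega
  have hkey := ww_key n hn
  rw [zz_zero, show zz A B (n - 1) = (ww A B (n - 2))⁻¹ * ww A B ((n - 2) + 1) from by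
    rw [h2]; rfl, ← h2]
  calc (ww A B (n - 2))⁻¹ * ww A B (n - 1) * A
      = (ww A B (n - 2))⁻¹ * (ww A B (n - 1) * A) := by group
    _ = (ww A B (n - 2))⁻¹ * ww A B n := by rw [← hkey]
    _ = (ww A B (n - 2))⁻¹ * (ww A B (n - 2) * A * B) := by
        rw [congrArg (ww A B) h3, ww_step]
    _ = A * B := by group

/-- The map `Fin n → DA_n` defining `ψ`. -/
noncomputable def gmap : Fin n → PresentedGroup (DARels n) :=
  fun i => zz (Agen n) (Bgen n) i.val

lemma val_one (hn : 2 ≤ n) : ((1 : Fin n) : ℕ) = 1 := by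
  simp [Fin.val_one', Nat.mod_eq_of_lt (by omega : 1 < n)]

lemma psi_wd (hn : 2 ≤ n) :
    ∀ r ∈ Gn2Rels n, FreeGroup.lift (gmap n) r = 1 := by
  intro r hr
  obtain ⟨i, rfl⟩ := hr
  set A := Agen n
  set B := Bgen n
  rw [map_mul, map_inv, map_mul, map_mul, mul_inv_eq_one]
  simp only [FreeGroup.lift_apply_of, gmap]
  rw [show ((0 : Fin n) : ℕ) = 0 from rfl, val_one n hn, zz_zero, zz_one]
  by_cases hi : (i : ℕ) + 1 < n
  · rw [show ((i + 1 : Fin n) : ℕ) = (i : ℕ) + 1 from by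
      rw [Fin.val_add, val_one n hn, Nat.mod_eq_of_lt hi]]
    exact zz_mul A B i
  · have hival : (i : ℕ) = n - 1 := by have := i.isLt; omega
    rw [show ((i + 1 : Fin n) : ℕ) = 0 from by
      rw [Fin.val_add, val_one n hn, hival, show n - 1 + 1 = n from by omega, Nat.mod_self],
      hival]
    exact zz_wrap n hn

noncomputable def psi (hn : 2 ≤ n) :
    PresentedGroup (Gn2Rels n) →* PresentedGroup (DARels n) :=
  PresentedGroup.toGroup (psi_wd n hn)

lemma phi_A (hn : 2 ≤ n) : phi n hn (Agen n) = Y n 0 :=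
  PresentedGroup.toGroup.of (phi_wd n hn)

lemma phi_B (hn : 2 ≤ n) : phi n hn (Bgen n) = Y n 1 :=
  PresentedGroup.toGroup.of (phi_wd n hn)

lemma zz_Y (j : ℕ) : zz (Y n 0) (Y n 1) j = Y n j := by
  have hQ : ∀ j, zz (Y n 0) (Y n 1) (j + 1) = Y n (j + 1) := by
    intro j
    induction j with
    | zero => simp
    | succ j ih =>
      rw [zz_succ_succ, ih, Y_step n (j + 1)]
      rfl
  cases j with
  | zero => simp
  | succ j => exact hQ j

lemma phi_of (hn : 2 ≤ n) (i : Fin 2) :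
    phi n hn (PresentedGroup.of i) = fmap n i :=
  PresentedGroup.toGroup.of (phi_wd n hn)

lemma psi_of (hn : 2 ≤ n) (i : Fin n) :
    psi n hn (PresentedGroup.of i) = zz (Agen n) (Bgen n) i.val :=
  PresentedGroup.toGroup.of (psi_wd n hn)

lemma comp_left (hn : 2 ≤ n) :
    (psi n hn).comp (phi n hn) = MonoidHom.id (PresentedGroup (DARels n)) := by
  ext x
  simp only [MonoidHom.comp_apply, MonoidHom.id_apply]
  fin_cases x
  · rw [show (⟨0, by omega⟩ : Fin 2) = 0 from rfl, phi_of n hn 0,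
      show fmap n 0 = PresentedGroup.of ((0 : ℕ) : Fin n) from rfl,
      show ((0 : ℕ) : Fin n) = 0 from by simp, psi_of n hn 0,
      show ((0 : Fin n) : ℕ) = 0 from rfl, zz_zero]
    rfl
  · rw [show (⟨1, by omega⟩ : Fin 2) = 1 from rfl, phi_of n hn 1,
      show fmap n 1 = PresentedGroup.of ((1 : ℕ) : Fin n) from rfl,
      show ((1 : ℕ) : Fin n) = 1 from by simp, psi_of n hn 1,
      val_one n hn, zz_one]
    rfl

lemma comp_right (hn : 2 ≤ n) :
    (phi n hn).comp (psi n hn) = MonoidHom.id (PresentedGroup (Gn2Rels n)) := by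
  ext i
  simp only [MonoidHom.comp_apply, MonoidHom.id_apply]
  rw [psi_of n hn i, map_zz, phi_A n hn, phi_B n hn, zz_Y]
  show PresentedGroup.of (((i : ℕ) : Fin n)) = PresentedGroup.of i
  rw [Fin.cast_val_eq_self]

end Main

/-- For `n ≥ 2`, the dihedral Artin group `DA_n` is isomorphic to
`G_{2,n}` and to `G_{n,2}`. -/
theorem dihedral_artin_iso_G2n_and_Gn2 (n : ℕ) (hn : 2 ≤ n) [NeZero n] :
    Nonempty (PresentedGroup (DARels n) ≃* PresentedGroup (G2nRels n)) ∧
    Nonempty (PresentedGroup (DARels n) ≃* PresentedGroup (Gn2Rels n)) := by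
  constructor
  · exact ⟨MulEquiv.refl (PresentedGroup (DARels n))⟩
  · exact ⟨MonoidHom.toMulEquiv (phi n hn) (psi n hn) (comp_left n hn) (comp_right n hn)⟩
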